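/- Let φ : ℕ → (0,∞) be increasing with ∑_{n≥1} φ(n)/n² < ∞, and f : ℕ → ℝ such that f(n+m) ≤ f(n) + f(m) + φ(n+m) for all n ∈ ℕ and all integers m with n/2 ≤ m ≤ 2n. Then f(n)/n converges to a limit ℓ ∈ ℝ ∪ {-∞} as n → ∞. -/

import Mathlib

open Filter

noncomputable def dbeT (φ : ℕ → ℝ) (n : ℕ) : ℝ :=
  ∑' k : ℕ, φ (k + n) / ((k + n : ℕ) : ℝ) ^ 2

section

variable {φ f : ℕ → ℝ}

lemma dbe_summable (hφsum : Summable (fun n : ℕ => φ n / (n : ℝ) ^ 2)) (n : ℕ) :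
    Summable (fun k : ℕ => φ (k + n) / ((k + n : ℕ) : ℝ) ^ 2) :=
  (summable_nat_add_iff (f := fun n : ℕ => φ n / (n : ℝ) ^ 2) n).2 hφsum

lemma dbeT_nonneg (hφpos : ∀ n, 0 < φ n) (n : ℕ) : 0 ≤ dbeT φ n :=
  tsum_nonneg fun k => div_nonneg (hφpos _).le (sq_nonneg _)

lemma dbeT_tendsto (hφsum : Summable (fun n : ℕ => φ n / (n : ℝ) ^ 2)) :
    Tendsto (dbeT φ) atTop (nhds 0) :=
  tendsto_sum_nat_add (fun n : ℕ => φ n / (n : ℝ) ^ 2)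

lemma dbeT_sub (hφsum : Summable (fun n : ℕ => φ n / (n : ℝ) ^ 2)) (n d : ℕ) :
    dbeT φ n = (∑ i ∈ Finset.range d, φ (i + n) / ((i + n : ℕ) : ℝ) ^ 2) + dbeT φ (d + n) := by
  have h := Summable.sum_add_tsum_nat_add (f := fun k : ℕ => φ (k + n) / ((k + n : ℕ) : ℝ) ^ 2) d
    (dbe_summable hφsum n)
  rw [dbeT, ← h, dbeT]
  congr 1
  apply tsum_congr
  intro k
  simp only [add_assoc]

lemma dbeT_antitone (hφpos : ∀ n, 0 < φ n)
    (hφsum : Summable (fun n : ℕ => φ n / (n : ℝ) ^ 2)) : Antitone (dbeT φ) := by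
  intro m n hmn
  have h := dbeT_sub (φ := φ) hφsum m (n - m)
  have he : n - m + m = n := by omega
  rw [he] at h
  rw [h]
  have : 0 ≤ ∑ i ∈ Finset.range (n - m), φ (i + m) / ((i + m : ℕ) : ℝ) ^ 2 :=
    Finset.sum_nonneg fun i _ => div_nonneg (hφpos _).le (sq_nonneg _)
  linarith

lemma dbe_phi_le (hφpos : ∀ n, 0 < φ n) (hφmono : Monotone φ)
    (hφsum : Summable (fun n : ℕ => φ n / (n : ℝ) ^ 2)) {N : ℕ} (hN : 1 ≤ N) :
    φ N ≤ 4 * N * (dbeT φ N - dbeT φ (2 * N)) := by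
  have hN0 : (0 : ℝ) < N := by exact_mod_cast hN
  have h := dbeT_sub (φ := φ) hφsum N N
  have he : N + N = 2 * N := by omega
  rw [he] at h
  have hsum : (N : ℝ) * (φ N / (2 * (N : ℝ)) ^ 2) ≤
      ∑ i ∈ Finset.range N, φ (i + N) / ((i + N : ℕ) : ℝ) ^ 2 := by
    have hterm : ∀ i ∈ Finset.range N,
        φ N / (2 * (N : ℝ)) ^ 2 ≤ φ (i + N) / ((i + N : ℕ) : ℝ) ^ 2 := by
      intro i hi
      rw [Finset.mem_range] at hi
      have h1 : (0 : ℝ) < ((i + N : ℕ) : ℝ) ^ 2 := by positivity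
      have h2 : ((i + N : ℕ) : ℝ) ^ 2 ≤ (2 * (N : ℝ)) ^ 2 := by
        have hi' : (i : ℝ) < N := by exact_mod_cast hi
        have : ((i + N : ℕ) : ℝ) ≤ 2 * (N : ℝ) := by push_cast; linarith
        nlinarith [Nat.cast_nonneg (α := ℝ) (i + N)]
      exact div_le_div₀ (hφpos _).le (hφmono (by omega)) h1 h2
    have := Finset.card_nsmul_le_sum (Finset.range N)
      (fun i => φ (i + N) / ((i + N : ℕ) : ℝ) ^ 2) (φ N / (2 * (N : ℝ)) ^ 2) hterm
    simpa [nsmul_eq_mul] using this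
  have heq : (N : ℝ) * (φ N / (2 * (N : ℝ)) ^ 2) = φ N / (4 * N) := by
    field_simp; ring
  have h1 : φ N / (4 * N) ≤ dbeT φ N - dbeT φ (2 * N) := by
    rw [← heq]; linarith
  calc φ N = 4 * (N : ℝ) * (φ N / (4 * N)) := by field_simp
    _ ≤ 4 * N * (dbeT φ N - dbeT φ (2 * N)) := by
        apply mul_le_mul_of_nonneg_left h1 (by positivity)

end

section

variable {φ f : ℕ → ℝ}

lemma dbe_chain (hφpos : ∀ n, 0 < φ n) (hφmono : Monotone φ)
    (hφsum : Summable (fun n : ℕ => φ n / (n : ℝ) ^ 2))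
    (hsub : ∀ n m : ℕ, (n : ℝ) / 2 ≤ m → (m : ℝ) ≤ 2 * n →
      f (n + m) ≤ f n + f m + φ (n + m))
    {n₀ : ℕ} (h₀ : 1 ≤ n₀) (k : ℕ) :
    f (2 ^ k * n₀) ≤
      (f n₀ / n₀ + 8 * (dbeT φ (2 * n₀) - dbeT φ (2 ^ (k + 1) * n₀))) * ((2 ^ k * n₀ : ℕ) : ℝ) := by
  induction k with
  | zero =>
    have hn0 : ((n₀ : ℝ)) ≠ 0 := by positivity
    have a0 : 2 ^ 0 * n₀ = n₀ := by norm_num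
    have a1 : 2 ^ (0 + 1) * n₀ = 2 * n₀ := by norm_num
    rw [a0, a1, sub_self, mul_zero, add_zero, div_mul_cancel₀ _ hn0]
  | succ k IH =>
    set N : ℕ := 2 ^ k * n₀ with hN
    have hN1 : 1 ≤ N := Nat.one_le_iff_ne_zero.2 (by positivity)
    have hNpos : (0 : ℝ) < N := by exact_mod_cast hN1
    have e1 : 2 ^ (k + 1) * n₀ = 2 * N := by rw [hN]; ring
    have e2 : 2 ^ (k + 1 + 1) * n₀ = 2 * (2 * N) := by rw [hN]; ring
    have hdub : f (N + N) ≤ f N + f N + φ (N + N) := by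
      apply hsub N N
      · have : (0:ℝ) ≤ N := hNpos.le
        linarith
      · have : (0:ℝ) ≤ N := hNpos.le
        linarith
    have heNN : N + N = 2 * N := by omega
    rw [heNN] at hdub
    have hphi : φ (2 * N) ≤ 4 * ((2 * N : ℕ) : ℝ) * (dbeT φ (2 * N) - dbeT φ (2 * (2 * N))) :=
      dbe_phi_le hφpos hφmono hφsum (by omega)
    have hanti : dbeT φ (2 * (2 * N)) ≤ dbeT φ (2 * N) :=
      dbeT_antitone hφpos hφsum (by omega)
    rw [e1] at IH
    rw [e1, e2]
    have hc : ((2 * N : ℕ) : ℝ) = 2 * (N : ℝ) := by push_cast; ring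
    rw [hc] at hphi ⊢
    set c₀ := f n₀ / n₀
    set T2 := dbeT φ (2 * n₀)
    set tA := dbeT φ (2 * N)
    set tB := dbeT φ (2 * (2 * N))
    have hmul : 4 * (N:ℝ) * tB ≤ 4 * (N:ℝ) * tA :=
      mul_le_mul_of_nonneg_left hanti (by positivity)
    nlinarith [IH, hphi, hdub, hmul]

lemma dbe_chain' (hφpos : ∀ n, 0 < φ n) (hφmono : Monotone φ)
    (hφsum : Summable (fun n : ℕ => φ n / (n : ℝ) ^ 2))
    (hsub : ∀ n m : ℕ, (n : ℝ) / 2 ≤ m → (m : ℝ) ≤ 2 * n →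
      f (n + m) ≤ f n + f m + φ (n + m))
    {n₀ : ℕ} (h₀ : 1 ≤ n₀) (k : ℕ) :
    f (2 ^ k * n₀) ≤ (f n₀ / n₀ + 8 * dbeT φ n₀) * ((2 ^ k * n₀ : ℕ) : ℝ) := by
  have h := dbe_chain hφpos hφmono hφsum hsub h₀ k
  have h1 : dbeT φ (2 * n₀) ≤ dbeT φ n₀ := dbeT_antitone hφpos hφsum (by omega)
  have h2 : 0 ≤ dbeT φ (2 ^ (k + 1) * n₀) := dbeT_nonneg hφpos _
  have h3 : (0:ℝ) ≤ ((2 ^ k * n₀ : ℕ) : ℝ) := Nat.cast_nonneg _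
  refine h.trans (mul_le_mul_of_nonneg_right ?_ h3)
  linarith

end

section

variable {φ f : ℕ → ℝ}

lemma dbe_key (hφpos : ∀ n, 0 < φ n) (hφmono : Monotone φ)
    (hφsum : Summable (fun n : ℕ => φ n / (n : ℝ) ^ 2))
    (hsub : ∀ n m : ℕ, (n : ℝ) / 2 ≤ m → (m : ℝ) ≤ 2 * n →
      f (n + m) ≤ f n + f m + φ (n + m))
    {n₀ : ℕ} (h₀ : 1 ≤ n₀) :
    ∃ C : ℝ, 0 ≤ C ∧ ∀ m, n₀ ≤ m →
      f m ≤ (f n₀ / n₀ + 20 * dbeT φ n₀) * m + C := by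
  set A : ℝ := f n₀ / n₀ + 20 * dbeT φ n₀ with hA
  refine ⟨∑ j ∈ Finset.Ico n₀ (3 * n₀), |f j - A * j|,
    Finset.sum_nonneg fun j _ => abs_nonneg _, ?_⟩
  set C : ℝ := ∑ j ∈ Finset.Ico n₀ (3 * n₀), |f j - A * j| with hC
  have ht0 : 0 ≤ dbeT φ n₀ := dbeT_nonneg hφpos _
  intro m
  induction m using Nat.strong_induction_on with
  | _ m IH =>
    intro hm
    by_cases hm3 : m < 3 * n₀
    · have hmem : m ∈ Finset.Ico n₀ (3 * n₀) := Finset.mem_Ico.2 ⟨hm, hm3⟩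
      have h1 : |f m - A * m| ≤ C :=
        Finset.single_le_sum (f := fun j => |f j - A * (j:ℝ)|)
          (fun j _ => abs_nonneg _) hmem
      have h2 := le_abs_self (f m - A * (m:ℝ))
      linarith
    · push_neg at hm3
      -- find dyadic a
      set P : ℕ → Prop := fun i => 3 * (2 ^ i * n₀) ≤ 2 * m with hP
      have hP0 : P 0 := by simp only [hP, pow_zero, one_mul]; omega
      have hPk : P (Nat.findGreatest P (2 * m)) :=
        Nat.findGreatest_spec (Nat.zero_le _) hP0
      set k := Nat.findGreatest P (2 * m) with hk
      have hklt : k < 2 * m := by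
        have h1 : k < 2 ^ k := Nat.lt_two_pow_self
        have h2 : 2 ^ k ≤ 3 * (2 ^ k * n₀) := by
          have : 1 ≤ n₀ := h₀
          nlinarith [Nat.one_le_two_pow (n := k)]
        omega
      have hnot : ¬ P (k + 1) :=
        Nat.findGreatest_is_greatest (n := 2 * m) (k := k + 1) (by omega) (by omega)
      set a := 2 ^ k * n₀ with ha
      have ha1 : 3 * a ≤ 2 * m := hPk
      have ha2 : 2 * m < 6 * a := by
        have : 3 * (2 ^ (k+1) * n₀) = 6 * a := by rw [ha]; ring
        omega
      have hapos : 1 ≤ a := Nat.one_le_iff_ne_zero.2 (by positivity)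
      set b := m - a with hb
      have hab : a + b = m := by omega
      have hb₀ : n₀ ≤ b := by omega
      have hblt : b < m := by omega
      have hba1 : a ≤ 2 * b := by omega
      have hba2 : b ≤ 2 * a := by omega
      -- apply subadditivity
      have hsab : f (a + b) ≤ f a + f b + φ (a + b) := by
        apply hsub a b
        · have h1 : ((a:ℝ)) ≤ 2 * b := by exact_mod_cast hba1
          linarith
        · have h1 : ((b:ℝ)) ≤ 2 * a := by exact_mod_cast hba2
          linarith
      have hfa : f a ≤ (f n₀ / n₀ + 8 * dbeT φ n₀) * ((a : ℕ) : ℝ) :=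
        dbe_chain' hφpos hφmono hφsum hsub h₀ k
      have hfb : f b ≤ A * b + C := IH b hblt hb₀
      -- φ bound
      have hφm : φ (a + b) ≤ 4 * (((a + b : ℕ)) : ℝ) *
          (dbeT φ (a + b) - dbeT φ (2 * (a + b))) :=
        dbe_phi_le hφpos hφmono hφsum (by omega)
      have htm : dbeT φ (a + b) ≤ dbeT φ n₀ := dbeT_antitone hφpos hφsum (by omega)
      have ht2 : 0 ≤ dbeT φ (2 * (a + b)) := dbeT_nonneg hφpos _
      have hcab : ((a + b : ℕ) : ℝ) ≤ 3 * a := by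
        have : a + b ≤ 3 * a := by omega
        exact_mod_cast this
      have hcab0 : (0:ℝ) ≤ ((a + b : ℕ) : ℝ) := Nat.cast_nonneg _
      have ha0 : (0:ℝ) ≤ (a : ℝ) := Nat.cast_nonneg _
      have hφm2 : φ (a + b) ≤ 12 * (a : ℝ) * dbeT φ n₀ := by
        have h1 : 4 * (((a + b : ℕ)) : ℝ) * (dbeT φ (a + b) - dbeT φ (2 * (a + b))) ≤
            4 * (((a + b : ℕ)) : ℝ) * dbeT φ n₀ := by
          apply mul_le_mul_of_nonneg_left _ (by positivity)
          linarith
        have h2 : 4 * (((a + b : ℕ)) : ℝ) * dbeT φ n₀ ≤ 12 * (a : ℝ) * dbeT φ n₀ := by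
          apply mul_le_mul_of_nonneg_right _ ht0
          linarith
        linarith
      -- combine
      rw [← hab]
      have hcast : ((a + b : ℕ) : ℝ) = (a : ℝ) + (b : ℝ) := by push_cast; ring
      rw [hcast, hA]
      rw [hA] at hfb
      nlinarith [hsab, hfa, hfb, hφm2]

end

theorem stmt_3 (φ : ℕ → ℝ) (f : ℕ → ℝ)
    (hφpos : ∀ n, 0 < φ n) (hφmono : Monotone φ)
    (hφsum : Summable (fun n : ℕ => φ n / (n : ℝ) ^ 2))
    (hsub : ∀ n m : ℕ, (n : ℝ) / 2 ≤ m → (m : ℝ) ≤ 2 * n →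
      f (n + m) ≤ f n + f m + φ (n + m)) :
    ∃ ℓ : EReal, ℓ ≠ ⊤ ∧
      Filter.Tendsto (fun n : ℕ => ((f n / n : ℝ) : EReal)) Filter.atTop (nhds ℓ) := by
  have hE : ∀ n₀ : ℕ, 1 ≤ n₀ → ∀ δ : ℝ, 0 < δ →
      ∀ᶠ m in atTop, f m / m ≤ f n₀ / n₀ + 20 * dbeT φ n₀ + δ := by
    intro n₀ h₀ δ hδ
    obtain ⟨C, hC0, hC⟩ := dbe_key hφpos hφmono hφsum hsub h₀
    rw [eventually_atTop]
    refine ⟨max n₀ (Nat.ceil (C / δ) + 1), fun m hm => ?_⟩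
    have hm₀ : n₀ ≤ m := le_trans (le_max_left _ _) hm
    have hm1 : 1 ≤ m := le_trans h₀ hm₀
    have hmpos : (0:ℝ) < m := by exact_mod_cast hm1
    have h1 := hC m hm₀
    have hCm : C ≤ δ * m := by
      have h2 : (Nat.ceil (C / δ) + 1 : ℕ) ≤ m := le_trans (le_max_right _ _) hm
      have h3 : C / δ ≤ (m : ℝ) := by
        refine le_trans (Nat.le_ceil _) ?_
        exact_mod_cast (by omega : Nat.ceil (C / δ) ≤ m)
      calc C = δ * (C / δ) := by field_simp
        _ ≤ δ * m := mul_le_mul_of_nonneg_left h3 hδ.le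
    rw [div_le_iff₀ hmpos]
    calc f m ≤ (f n₀ / n₀ + 20 * dbeT φ n₀) * m + C := h1
      _ ≤ (f n₀ / n₀ + 20 * dbeT φ n₀) * m + δ * m := by linarith
      _ = (f n₀ / n₀ + 20 * dbeT φ n₀ + δ) * m := by ring
  have hT20 : ∀ ε : ℝ, 0 < ε → ∀ᶠ n in atTop, dbeT φ n < ε := fun ε hε =>
    (dbeT_tendsto hφsum).eventually_lt_const hε
  by_cases hbdd : ∃ B : ℝ, ∀ᶠ n in atTop, B ≤ f n / n
  · obtain ⟨B, hB⟩ := hbdd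
    set u : ℕ → ℝ := fun n => f n / n with hu
    have hbdd_ge : IsBoundedUnder (· ≥ ·) atTop u := ⟨B, hB.mono fun n h => h⟩
    have hub : ∀ᶠ m in atTop, u m ≤ f 1 / (1:ℕ) + 20 * dbeT φ 1 + 1 := hE 1 le_rfl 1 one_pos
    have hbdd_le : IsBoundedUnder (· ≤ ·) atTop u := ⟨_, hub⟩
    set β := liminf u atTop with hβ
    have key : ∀ ε : ℝ, 0 < ε → limsup u atTop ≤ β + 22 * ε := by
      intro ε hε
      have hfreq : ∃ᶠ n in atTop, u n < β + ε :=
        frequently_lt_of_liminf_lt hbdd_le.isCoboundedUnder_ge (by linarith)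
      obtain ⟨n₀, hn₀lt, h1, htn₀⟩ :=
        (hfreq.and_eventually ((eventually_ge_atTop 1).and (hT20 ε hε))).exists
      have hev : ∀ᶠ m in atTop, u m ≤ β + 22 * ε := by
        filter_upwards [hE n₀ h1 ε hε] with m hm
        have : u n₀ = f n₀ / n₀ := rfl
        rw [this] at hn₀lt
        calc u m ≤ f n₀ / n₀ + 20 * dbeT φ n₀ + ε := hm
          _ ≤ β + 22 * ε := by linarith
      exact limsup_le_of_le hbdd_ge.isCoboundedUnder_le hev
    have hls : limsup u atTop ≤ β := by
      by_contra h
      push_neg at h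
      have := key ((limsup u atTop - β) / 44) (by linarith)
      linarith
    have hsl : β ≤ limsup u atTop := liminf_le_limsup hbdd_le hbdd_ge
    have htend : Tendsto u atTop (nhds β) :=
      tendsto_of_liminf_eq_limsup rfl (le_antisymm hls hsl) hbdd_le hbdd_ge
    exact ⟨(β : EReal), EReal.coe_ne_top β, EReal.tendsto_coe.2 htend⟩
  · push_neg at hbdd
    refine ⟨⊥, bot_ne_top, ?_⟩
    rw [EReal.tendsto_nhds_bot_iff_real]
    intro x
    have hfreq : ∃ᶠ n in atTop, f n / n < x - 3 := by
      have := hbdd (x - 3)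
      exact this
    obtain ⟨n₀, hn₀lt, h1, htn₀⟩ :=
      (hfreq.and_eventually ((eventually_ge_atTop 1).and (hT20 (1/20) (by norm_num)))).exists
    filter_upwards [hE n₀ h1 1 one_pos] with m hm
    have : f m / m < x := by linarith
    exact_mod_cast EReal.coe_lt_coe_iff.2 this
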